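/- For every d ∈ {1,2,3,7,11} the Farey graph E_d is connected; in particular, for every R ∈ ℚ(√(-d)) there exists a finite walk in E_d from ∞ to R. -/

import Mathlib

/-- `ω_d`: the generator of the ring of integers of `ℚ(√(-d))`. -/
noncomputable def omegaD (d : ℕ) : ℂ :=
  if d % 4 = 3 then (1 + Complex.I * Real.sqrt d) / 2 else Complex.I * Real.sqrt d

/-- The ring of integers `ℤ[ω_d]` of `ℚ(√(-d))`, as a subset of `ℂ`. -/
def ringInt (d : ℕ) : Set ℂ := {z | ∃ a b : ℤ, z = (a : ℂ) + (b : ℂ) * omegaD d}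

/-- `p` and `q` are coprime in `ℤ[ω_d]`. -/
def CoprimeIn (d : ℕ) (p q : ℂ) : Prop :=
  ∃ u v : ℂ, u ∈ ringInt d ∧ v ∈ ringInt d ∧ u * p + v * q = 1

/-- `x` is an element of the field `ℚ(√(-d)) ⊆ ℂ`. -/
def inK (d : ℕ) (x : ℂ) : Prop :=
  ∃ p q : ℂ, p ∈ ringInt d ∧ q ∈ ringInt d ∧ q ≠ 0 ∧ x = p / q

/-- The point `p/q` of `ℂ ∪ {∞}`, with `p/0 = ∞`. -/
noncomputable def divC (p q : ℂ) : OnePoint ℂ :=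
  if q = 0 then OnePoint.infty else ((p / q : ℂ) : OnePoint ℂ)

/-- Two points of `ℚ(√(-d)) ∪ {∞}` are Farey neighbours (joined by an edge of
the Farey graph `E_d`) if they have coprime representations `p₁/q₁`, `p₂/q₂`
with `|p₁q₂ − p₂q₁| = 1`. -/
def FareyAdj (d : ℕ) (x y : OnePoint ℂ) : Prop :=
  ∃ p₁ q₁ p₂ q₂ : ℂ, p₁ ∈ ringInt d ∧ q₁ ∈ ringInt d ∧ p₂ ∈ ringInt d ∧ q₂ ∈ ringInt d ∧
    CoprimeIn d p₁ q₁ ∧ CoprimeIn d p₂ q₂ ∧ x = divC p₁ q₁ ∧ y = divC p₂ q₂ ∧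
    ‖p₁ * q₂ - p₂ * q₁‖ = 1

/-- `f 0 → f 1 → ⋯ → f n` is a walk (of length `n`) in the Farey graph `E_d`. -/
def IsWalk (d n : ℕ) (f : ℕ → OnePoint ℂ) : Prop := ∀ k, k < n → FareyAdj d (f k) (f (k + 1))

/-- `f 0 → ⋯ → f n` is a geodesic path in `E_d`: a walk of minimal length
among all walks with the same endpoints. -/
def IsGeodesicWalk (d n : ℕ) (f : ℕ → OnePoint ℂ) : Prop :=
  IsWalk d n f ∧ ∀ (m : ℕ) (g : ℕ → OnePoint ℂ), IsWalk d m g → g 0 = f 0 → g m = f n → n ≤ m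

/-- Numerators of the convergents of `[a₁, a₂, …]` (`a 0` is unused):
`p₀ = 0`, `p₁ = 1`, `p_k = a_k p_{k−1} + p_{k−2}`. -/
noncomputable def cfP (a : ℕ → ℂ) : ℕ → ℂ
  | 0 => 0
  | 1 => 1
  | (k + 2) => a (k + 2) * cfP a (k + 1) + cfP a k

/-- Denominators of the convergents of `[a₁, a₂, …]`:
`q₀ = 1`, `q₁ = a₁`, `q_k = a_k q_{k−1} + q_{k−2}`. -/
noncomputable def cfQ (a : ℕ → ℂ) : ℕ → ℂ
  | 0 => 1
  | 1 => a 1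
  | (k + 2) => a (k + 2) * cfQ a (k + 1) + cfQ a k

/-- The walk `∞ → p₀/q₀ = 0 → p₁/q₁ → ⋯` along the convergents of `[a₁, a₂, …]`. -/
noncomputable def cfWalk (a : ℕ → ℂ) : ℕ → OnePoint ℂ :=
  fun k => if k = 0 then OnePoint.infty else divC (cfP a (k - 1)) (cfQ a (k - 1))

/-- A vertex of the Farey graph `E_d`: a point of `ℚ(√(-d)) ∪ {∞}`. -/
def isVertex (d : ℕ) (x : OnePoint ℂ) : Prop :=
  x = OnePoint.infty ∨ ∃ z : ℂ, x = ((z : ℂ) : OnePoint ℂ) ∧ inK d z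

structure GoodD (d : ℕ) : Prop where
  sq : ∃ α β : ℤ, omegaD d ^ 2 = (α : ℂ) + (β : ℂ) * omegaD d
  tr : ∃ t : ℤ, 2 * (omegaD d).re = (t : ℝ)
  nm : ∃ n : ℤ, Complex.normSq (omegaD d) = (n : ℝ)
  im_sq_lt : (omegaD d).im ^ 2 < 3
  im_ne : (omegaD d).im ≠ 0

lemma omegaD_re_ne (d : ℕ) (h : d % 4 ≠ 3) : (omegaD d).re = 0 := by
  rw [omegaD, if_neg h]; simp

lemma omegaD_im_ne (d : ℕ) (h : d % 4 ≠ 3) : (omegaD d).im = Real.sqrt d := by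
  rw [omegaD, if_neg h]; simp

lemma omegaD_re_eq (d : ℕ) (h : d % 4 = 3) : (omegaD d).re = 1/2 := by
  rw [omegaD, if_pos h]; simp [Complex.div_re, Complex.normSq]

lemma omegaD_im_eq (d : ℕ) (h : d % 4 = 3) : (omegaD d).im = Real.sqrt d / 2 := by
  rw [omegaD, if_pos h]; simp [Complex.div_im, Complex.normSq]

lemma sqrtd_sq (d : ℕ) : ((Real.sqrt d : ℂ)) ^ 2 = (d : ℂ) := by
  rw [← Complex.ofReal_pow, Real.sq_sqrt (by positivity)]
  norm_cast

lemma goodD_of_ne (d : ℕ) (h : d % 4 ≠ 3) (h0 : 0 < d) (h3 : d < 3) : GoodD d := by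
  have hre := omegaD_re_ne d h
  have him := omegaD_im_ne d h
  have hω : omegaD d = Complex.I * Real.sqrt d := by rw [omegaD, if_neg h]
  constructor
  · exact ⟨-(d : ℤ), 0, by
      rw [hω]; push_cast
      rw [mul_pow, Complex.I_sq, sqrtd_sq]; ring⟩
  · exact ⟨0, by rw [hre]; simp⟩
  · exact ⟨(d : ℤ), by
      rw [Complex.normSq_apply, hre, him]
      push_cast
      rw [Real.mul_self_sqrt (by positivity)]; ring⟩
  · rw [him, Real.sq_sqrt (by positivity)]
    exact_mod_cast lt_of_lt_of_le (Nat.cast_lt.mpr h3) (by norm_num)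
  · rw [him]
    positivity

lemma goodD_of_eq (d e : ℕ) (h : d % 4 = 3) (he : 4 * e = d + 1) (h12 : d < 12) : GoodD d := by
  have hre := omegaD_re_eq d h
  have him := omegaD_im_eq d h
  have hω : omegaD d = (1 + Complex.I * Real.sqrt d) / 2 := by rw [omegaD, if_pos h]
  have h0 : 0 < d := by omega
  have hcast : (4 : ℂ) * e = (d : ℂ) + 1 := by exact_mod_cast he
  constructor
  · refine ⟨-(e : ℤ), 1, ?_⟩
    rw [hω]; push_cast
    have hI := Complex.I_sq
    field_simp
    ring_nf
    rw [Complex.I_sq, sqrtd_sq]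
    linear_combination hcast
  · exact ⟨1, by rw [hre]; norm_num⟩
  · refine ⟨(e : ℤ), ?_⟩
    rw [Complex.normSq_apply, hre, him]
    have : Real.sqrt d * Real.sqrt d = d := Real.mul_self_sqrt (by positivity)
    have hr : (4 : ℝ) * e = (d : ℝ) + 1 := by exact_mod_cast he
    push_cast
    nlinarith [this, hr]
  · rw [him]
    have : Real.sqrt d ^ 2 = d := Real.sq_sqrt (by positivity)
    have : (Real.sqrt d / 2) ^ 2 = (d : ℝ) / 4 := by rw [div_pow, this]; norm_num
    rw [this]
    have : (d : ℝ) < 12 := by exact_mod_cast h12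
    linarith
  · rw [him]
    positivity

lemma ringInt_intCast (d : ℕ) (n : ℤ) : (n : ℂ) ∈ ringInt d := ⟨n, 0, by simp⟩

lemma ringInt_zero (d : ℕ) : (0 : ℂ) ∈ ringInt d := by simpa using ringInt_intCast d 0

lemma ringInt_one (d : ℕ) : (1 : ℂ) ∈ ringInt d := by simpa using ringInt_intCast d 1

lemma ringInt_add {d : ℕ} {z w : ℂ} (hz : z ∈ ringInt d) (hw : w ∈ ringInt d) :
    z + w ∈ ringInt d := by
  obtain ⟨a, b, rfl⟩ := hz; obtain ⟨c, e, rfl⟩ := hw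
  exact ⟨a + c, b + e, by push_cast; ring⟩

lemma ringInt_neg {d : ℕ} {z : ℂ} (hz : z ∈ ringInt d) : -z ∈ ringInt d := by
  obtain ⟨a, b, rfl⟩ := hz
  exact ⟨-a, -b, by push_cast; ring⟩

lemma ringInt_sub {d : ℕ} {z w : ℂ} (hz : z ∈ ringInt d) (hw : w ∈ ringInt d) :
    z - w ∈ ringInt d := by
  simpa [sub_eq_add_neg] using ringInt_add hz (ringInt_neg hw)

lemma ringInt_mul {d : ℕ} (hg : GoodD d) {z w : ℂ} (hz : z ∈ ringInt d) (hw : w ∈ ringInt d) :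
    z * w ∈ ringInt d := by
  obtain ⟨α, β, hαβ⟩ := hg.sq
  obtain ⟨a, b, rfl⟩ := hz; obtain ⟨c, e, rfl⟩ := hw
  refine ⟨a * c + b * e * α, a * e + b * c + b * e * β, ?_⟩
  push_cast
  linear_combination (b : ℂ) * e * hαβ

lemma ringInt_normSq_nat {d : ℕ} (hg : GoodD d) {z : ℂ} (hz : z ∈ ringInt d) :
    ∃ m : ℕ, Complex.normSq z = (m : ℝ) := by
  obtain ⟨t, ht⟩ := hg.tr
  obtain ⟨n, hn⟩ := hg.nm
  obtain ⟨a, b, rfl⟩ := hz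
  set ω := omegaD d
  have hre : ((a : ℂ) + (b : ℂ) * ω).re = (a : ℝ) + (b : ℝ) * ω.re := by simp
  have him : ((a : ℂ) + (b : ℂ) * ω).im = (b : ℝ) * ω.im := by simp
  have key : Complex.normSq ((a : ℂ) + (b : ℂ) * ω)
      = ((a ^ 2 + a * b * t + b ^ 2 * n : ℤ) : ℝ) := by
    rw [Complex.normSq_apply, hre, him]
    have hn' : ω.re ^ 2 + ω.im ^ 2 = (n : ℝ) := by
      rw [← hn, Complex.normSq_apply]; ring
    push_cast
    linear_combination ((a : ℝ) * b) * ht + ((b : ℝ) ^ 2) * hn'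
  have hnonneg : (0 : ℝ) ≤ ((a ^ 2 + a * b * t + b ^ 2 * n : ℤ) : ℝ) := by
    rw [← key]; exact Complex.normSq_nonneg _
  have : (0 : ℤ) ≤ a ^ 2 + a * b * t + b ^ 2 * n := by exact_mod_cast hnonneg
  exact ⟨(a ^ 2 + a * b * t + b ^ 2 * n).toNat, by rw [key]; exact_mod_cast (Int.toNat_of_nonneg this).symm⟩

lemma exists_near {d : ℕ} (hg : GoodD d) (ξ : ℂ) :
    ∃ a ∈ ringInt d, Complex.normSq (ξ - a) < 1 := by
  set ω := omegaD d
  have him := hg.im_ne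
  set b : ℤ := round (ξ.im / ω.im)
  set s : ℤ := round (ξ.re - (b : ℝ) * ω.re)
  refine ⟨(s : ℂ) + (b : ℂ) * ω, ⟨s, b, rfl⟩, ?_⟩
  have hre : (ξ - ((s : ℂ) + (b : ℂ) * ω)).re = ξ.re - (b : ℝ) * ω.re - (s : ℝ) := by
    simp; ring
  have him2 : (ξ - ((s : ℂ) + (b : ℂ) * ω)).im = ξ.im - (b : ℝ) * ω.im := by
    simp
  rw [Complex.normSq_apply, hre, him2]
  have h1 : |ξ.re - (b : ℝ) * ω.re - (s : ℝ)| ≤ 1 / 2 := by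
    simpa using abs_sub_round (ξ.re - (b : ℝ) * ω.re)
  have h2 : |ξ.im / ω.im - (b : ℝ)| ≤ 1 / 2 := abs_sub_round _
  have h3 : |ξ.im - (b : ℝ) * ω.im| ≤ |ω.im| / 2 := by
    have : ξ.im - (b : ℝ) * ω.im = (ξ.im / ω.im - (b : ℝ)) * ω.im := by
      field_simp
      rw [mul_comm ω.im, sub_mul, div_mul_cancel₀ _ (show ω.im ≠ 0 from him)]
    rw [this, abs_mul]
    calc |ξ.im / ω.im - (b : ℝ)| * |ω.im| ≤ (1/2) * |ω.im| :=
          mul_le_mul_of_nonneg_right h2 (abs_nonneg _)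
      _ = |ω.im| / 2 := by ring
  have hb1 : (ξ.re - (b : ℝ) * ω.re - (s : ℝ)) ^ 2 ≤ (1/2) ^ 2 := by
    rw [← sq_abs]; exact pow_le_pow_left₀ (abs_nonneg _) h1 2
  have hb2 : (ξ.im - (b : ℝ) * ω.im) ^ 2 ≤ (|ω.im| / 2) ^ 2 := by
    rw [← sq_abs]; exact pow_le_pow_left₀ (abs_nonneg _) h3 2
  have hω2 : (|ω.im| / 2) ^ 2 < 3 / 4 := by
    have : |ω.im| ^ 2 < 3 := by rw [sq_abs]; exact hg.im_sq_lt
    nlinarith [abs_nonneg ω.im]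
  nlinarith [hb1, hb2, hω2]

noncomputable def mob (a : ℂ) : OnePoint ℂ → OnePoint ℂ
  | OnePoint.infty => ((a : ℂ) : OnePoint ℂ)
  | (OnePoint.some z) => if z = 0 then OnePoint.infty else ((a + 1/z : ℂ) : OnePoint ℂ)

lemma mob_infty (a : ℂ) : mob a OnePoint.infty = ((a : ℂ) : OnePoint ℂ) := rfl

lemma mob_coe (a z : ℂ) (hz : z ≠ 0) : mob a (z : OnePoint ℂ) = ((a + 1/z : ℂ) : OnePoint ℂ) := by
  show (if z = 0 then OnePoint.infty else ((a + 1/z : ℂ) : OnePoint ℂ)) = _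
  rw [if_neg hz]

lemma mob_zero (a : ℂ) : mob a ((0 : ℂ) : OnePoint ℂ) = OnePoint.infty := by
  show (if (0:ℂ) = 0 then OnePoint.infty else _) = _
  rw [if_pos rfl]

lemma divC_coe (p q : ℂ) (hq : q ≠ 0) : divC p q = ((p / q : ℂ) : OnePoint ℂ) := by
  rw [divC, if_neg hq]

lemma divC_zero (p : ℂ) : divC p 0 = OnePoint.infty := by rw [divC, if_pos rfl]

lemma mob_divC (a p q : ℂ) (hp : q = 0 → p ≠ 0) :
    mob a (divC p q) = divC (a * p + q) p := by
  by_cases hq : q = 0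
  · subst hq
    have hp' := hp rfl
    rw [divC_zero, mob_infty, divC_coe _ _ hp']
    congr 1
    field_simp
    ring
  · rw [divC_coe _ _ hq]
    by_cases hp0 : p = 0
    · subst hp0
      rw [zero_div, mob_zero, divC_zero]
    · have hpq : (p / q : ℂ) ≠ 0 := div_ne_zero hp0 hq
      rw [mob_coe _ _ hpq, divC_coe _ _ hp0]
      congr 1
      field_simp

lemma coprime_ne_zero {d : ℕ} {p q : ℂ} (h : CoprimeIn d p q) (hq : q = 0) : p ≠ 0 := by
  obtain ⟨u, v, _, _, huv⟩ := h
  intro hp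
  rw [hp, hq] at huv
  simp at huv

lemma adj_infty_int {d : ℕ} {a : ℂ} (ha : a ∈ ringInt d) :
    FareyAdj d OnePoint.infty (divC a 1) := by
  refine ⟨1, 0, a, 1, ringInt_one d, ringInt_zero d, ha, ringInt_one d, ?_, ?_, ?_, rfl, ?_⟩
  · exact ⟨1, 0, ringInt_one d, ringInt_zero d, by ring⟩
  · exact ⟨0, 1, ringInt_zero d, ringInt_one d, by ring⟩
  · rw [divC_zero]
  · simp

lemma FareyAdj.symm {d : ℕ} {x y : OnePoint ℂ} (h : FareyAdj d x y) : FareyAdj d y x := by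
  obtain ⟨p₁, q₁, p₂, q₂, h1, h2, h3, h4, c1, c2, e1, e2, habs⟩ := h
  refine ⟨p₂, q₂, p₁, q₁, h3, h4, h1, h2, c2, c1, e2, e1, ?_⟩
  rw [show p₂ * q₁ - p₁ * q₂ = -(p₁ * q₂ - p₂ * q₁) by ring, norm_neg, habs]

lemma FareyAdj.mob {d : ℕ} (hg : GoodD d) {a : ℂ} (ha : a ∈ ringInt d) {x y : OnePoint ℂ}
    (h : FareyAdj d x y) : FareyAdj d (mob a x) (mob a y) := by
  obtain ⟨p₁, q₁, p₂, q₂, h1, h2, h3, h4, c1, c2, e1, e2, habs⟩ := h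
  refine ⟨a * p₁ + q₁, p₁, a * p₂ + q₂, p₂,
    ringInt_add (ringInt_mul hg ha h1) h2, h1,
    ringInt_add (ringInt_mul hg ha h3) h4, h3, ?_, ?_, ?_, ?_, ?_⟩
  · obtain ⟨u, v, hu, hv, huv⟩ := c1
    exact ⟨v, u - v * a, hv, ringInt_sub hu (ringInt_mul hg hv ha),
      by linear_combination huv⟩
  · obtain ⟨u, v, hu, hv, huv⟩ := c2
    exact ⟨v, u - v * a, hv, ringInt_sub hu (ringInt_mul hg hv ha),
      by linear_combination huv⟩
  · rw [e1, mob_divC a p₁ q₁ (coprime_ne_zero c1)]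
  · rw [e2, mob_divC a p₂ q₂ (coprime_ne_zero c2)]
  · rw [show (a * p₁ + q₁) * p₂ - (a * p₂ + q₂) * p₁ = -(p₁ * q₂ - p₂ * q₁) by ring,
      norm_neg, habs]

lemma walk_from_infty {d : ℕ} (hg : GoodD d) :
    ∀ m : ℕ, ∀ p q : ℂ, p ∈ ringInt d → q ∈ ringInt d → Complex.normSq q = (m : ℝ) →
      ∃ (n : ℕ) (f : ℕ → OnePoint ℂ),
        f 0 = OnePoint.infty ∧ f n = divC p q ∧ IsWalk d n f := by
  intro m
  induction m using Nat.strong_induction_on with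
  | _ m IH =>
    intro p q hp hq hm
    by_cases hq0 : q = 0
    · subst hq0
      exact ⟨0, fun _ => OnePoint.infty, rfl, (divC_zero p).symm, fun k hk => by omega⟩
    · obtain ⟨a, ha, hnear⟩ := exists_near hg (p / q)
      set r : ℂ := p - a * q with hr
      have hrmem : r ∈ ringInt d := ringInt_sub hp (ringInt_mul hg ha hq)
      have hqpos : 0 < Complex.normSq q := Complex.normSq_pos.mpr hq0
      have hrlt : Complex.normSq r < Complex.normSq q := by
        have : r = (p / q - a) * q := by field_simp [hr]; ring
        rw [this, Complex.normSq_mul]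
        calc Complex.normSq (p / q - a) * Complex.normSq q
            < 1 * Complex.normSq q := by
              exact mul_lt_mul_of_pos_right hnear hqpos
          _ = Complex.normSq q := one_mul _
      obtain ⟨m', hm'⟩ := ringInt_normSq_nat hg hrmem
      have hm'm : m' < m := by
        have : (m' : ℝ) < (m : ℝ) := by rw [← hm', ← hm]; exact hrlt
        exact_mod_cast this
      by_cases hr0 : r = 0
      · -- p = a q, so p/q = a; walk ∞ → a of length 1
        have hpq : divC p q = divC a 1 := by
          rw [divC_coe _ _ hq0, divC_coe _ _ one_ne_zero]
          have hpaq : p = a * q := by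
            have h' : p - a * q = 0 := by rw [← hr, hr0]
            linear_combination h'
          rw [hpaq, mul_div_assoc, div_self hq0, mul_one, div_one]
        refine ⟨1, fun k => if k = 0 then OnePoint.infty else divC a 1, rfl, by simp [hpq], ?_⟩
        intro k hk
        have : k = 0 := by omega
        subst this
        simpa using adj_infty_int ha
      · obtain ⟨n, g, hg0, hgn, hgw⟩ := IH m' hm'm q r hq hrmem hm'
        refine ⟨n + 1, fun k => if k = 0 then OnePoint.infty else mob a (g (k - 1)),
          rfl, ?_, ?_⟩
        · have h1 : mob a (g n) = divC p q := by
            rw [hgn, mob_divC a q r (fun h => absurd h hr0)]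
            rw [show a * q + r = p by rw [hr]; ring]
          simp only [Nat.add_sub_cancel, if_neg (Nat.succ_ne_zero n)]
          exact h1
        · intro k hk
          by_cases hk0 : k = 0
          · subst hk0
            simp only [if_pos rfl, if_neg one_ne_zero]
            have : g 0 = OnePoint.infty := hg0
            show FareyAdj d OnePoint.infty (mob a (g (1-1)))
            rw [show (1:ℕ) - 1 = 0 from rfl, this, mob_infty]
            have := adj_infty_int ha
            rwa [divC_coe _ _ one_ne_zero, div_one] at this
          · have hk1 : k - 1 < n := by omega
            have := (hgw (k-1) hk1).mob hg ha
            simp only [if_neg hk0, if_neg (by omega : k + 1 ≠ 0)]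
            rw [show k + 1 - 1 = (k - 1) + 1 by omega]
            exact this

lemma walk_infty_to_vertex {d : ℕ} (hg : GoodD d) {x : OnePoint ℂ} (hx : isVertex d x) :
    ∃ (n : ℕ) (f : ℕ → OnePoint ℂ), f 0 = OnePoint.infty ∧ f n = x ∧ IsWalk d n f := by
  rcases hx with rfl | ⟨z, rfl, p, q, hp, hq, hq0, rfl⟩
  · exact ⟨0, fun _ => OnePoint.infty, rfl, rfl, fun k hk => by omega⟩
  · obtain ⟨m, hm⟩ := ringInt_normSq_nat hg hq
    obtain ⟨n, f, h0, hn, hw⟩ := walk_from_infty hg m p q hp hq hm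
    exact ⟨n, f, h0, by rw [hn, divC_coe _ _ hq0], hw⟩

lemma walk_reverse {d n : ℕ} {f : ℕ → OnePoint ℂ} (hw : IsWalk d n f) :
    IsWalk d n (fun k => f (n - k)) := by
  intro k hk
  have h1 : n - k = (n - (k + 1)) + 1 := by omega
  have := (hw (n - (k + 1)) (by omega)).symm
  simpa [← h1] using this

/-- For every `d ∈ {1,2,3,7,11}` the Farey graph `E_d` is
connected; in particular, for every `R ∈ ℚ(√(-d))` there is a finite walk in
`E_d` from `∞` to `R`. -/
theorem farey_graph_connected (d : ℕ) (hd : d ∈ ({1, 2, 3, 7, 11} : Set ℕ))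
    (x y : OnePoint ℂ) (hx : isVertex d x) (hy : isVertex d y) :
    ∃ (n : ℕ) (f : ℕ → OnePoint ℂ), f 0 = x ∧ f n = y ∧ IsWalk d n f := by
  have hg : GoodD d := by
    rcases hd with rfl | rfl | rfl | rfl | rfl
    · exact goodD_of_ne 1 (by norm_num) (by norm_num) (by norm_num)
    · exact goodD_of_ne 2 (by norm_num) (by norm_num) (by norm_num)
    · exact goodD_of_eq 3 1 (by norm_num) (by norm_num) (by norm_num)
    · exact goodD_of_eq 7 2 (by norm_num) (by norm_num) (by norm_num)
    · exact goodD_of_eq 11 3 (by norm_num) (by norm_num) (by norm_num)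
  obtain ⟨n, f, hf0, hfn, hfw⟩ := walk_infty_to_vertex hg hx
  obtain ⟨m, g, hg0, hgm, hgw⟩ := walk_infty_to_vertex hg hy
  -- reversed f followed by g
  refine ⟨n + m, fun k => if k < n then f (n - k) else g (k - n), ?_, ?_, ?_⟩
  · by_cases h : 0 < n
    · simp only [if_pos h, Nat.sub_zero, hfn]
    · have hn0 : n = 0 := by omega
      subst hn0
      simp only [if_neg (lt_irrefl 0), Nat.sub_zero]
      rw [hg0, ← hf0, hfn]
  · have : ¬ (n + m < n) := by omega
    simp only [if_neg this, Nat.add_sub_cancel_left, hgm]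
  · intro k hk
    by_cases h1 : k + 1 < n
    · have h0 : k < n := by omega
      simp only [if_pos h0, if_pos h1]
      exact walk_reverse hfw k (by omega)
    · by_cases h0 : k < n
      · -- k + 1 = n
        have hkn : k + 1 = n := by omega
        simp only [if_pos h0, if_neg h1]
        have hthis := walk_reverse hfw k (by omega)
        simp only at hthis
        rw [show n - (k+1) = 0 by omega] at hthis
        rw [show k + 1 - n = 0 by omega, hg0, ← hf0]
        exact hthis
      · have hn : n ≤ k := by omega
        simp only [if_neg h0, if_neg (by omega : ¬ k + 1 < n)]
        rw [show k + 1 - n = (k - n) + 1 by omega]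
        exact hgw (k - n) (by omega)
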